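/- Let A be a self-adjoint Hopf algebra satisfying the Heisenberg relation Δ_x ∘ m_y = Σ m_{Δ_{x₍₂₎}(y)} ∘ Δ_{x₍₁₎} for all x, y. Then the image of the map φ : A ⊗ A → End(A), φ(x⊗y) = m_x ∘ Δ_y, is closed under composition, i.e. is a subalgebra of End(A) (containing the identity φ(1⊗1)). -/

import Mathlib

open TensorProduct

/-- **The image of `φ(x⊗y) = m_x ∘ Δ_y` is a subalgebra of `End(A)`.**
`A` is a commutative (co)commutative self-adjoint Hopf algebra; `D x = Δ_x` is the
adjoint of multiplication by `x`, satisfying `Δ_1 = id`, the comultiplicativity relation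
`Δ_x ∘ Δ_y = Δ_{y·x}`, and the Heisenberg relation
`Δ_x ∘ m_y = Σ m_{Δ_{x₍₂₎} y} ∘ Δ_{x₍₁₎}` (the Sweedler sum being expressed by applying a
bilinear map to `comul x`).  Then the range of `φ : A ⊗ A → End(A)`,
`φ(x ⊗ y) = m_x ∘ Δ_y`, contains the identity and is closed under composition. -/
theorem heisenberg_image_is_subalgebra
    {R A : Type*} [CommRing R] [CommRing A] [Bialgebra R A]
    (D : A →ₗ[R] A →ₗ[R] A)
    (hD1 : D 1 = LinearMap.id)
    (hDmul : ∀ x y : A, (D x) ∘ₗ (D y) = D (y * x))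
    (heis : ∀ x y : A,
      (D x) ∘ₗ ((Algebra.lmul R A).toLinearMap y) =
        TensorProduct.lift
          ((LinearMap.mul R (Module.End R A)).flip.compl₁₂ D
            ((Algebra.lmul R A).toLinearMap ∘ₗ D.flip y))
          (Coalgebra.comul (R := R) x)) :
    (1 : Module.End R A) ∈
      LinearMap.range (TensorProduct.lift
        ((LinearMap.mul R (Module.End R A)).compl₁₂ (Algebra.lmul R A).toLinearMap D)) ∧
    ∀ u v : Module.End R A,
      u ∈ LinearMap.range (TensorProduct.lift
        ((LinearMap.mul R (Module.End R A)).compl₁₂ (Algebra.lmul R A).toLinearMap D)) →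
      v ∈ LinearMap.range (TensorProduct.lift
        ((LinearMap.mul R (Module.End R A)).compl₁₂ (Algebra.lmul R A).toLinearMap D)) →
      u * v ∈ LinearMap.range (TensorProduct.lift
        ((LinearMap.mul R (Module.End R A)).compl₁₂ (Algebra.lmul R A).toLinearMap D)) := by
  set φ := TensorProduct.lift
      ((LinearMap.mul R (Module.End R A)).compl₁₂ (Algebra.lmul R A).toLinearMap D) with hφ
  have hφapp : ∀ x y : A, φ (x ⊗ₜ[R] y) = (Algebra.lmul R A x) * D y := by
    intro x y; simp [hφ, LinearMap.compl₁₂_apply]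
  constructor
  · exact ⟨(1 : A) ⊗ₜ[R] (1 : A), by
      rw [hφapp, hD1, map_one]; rfl⟩
  · rintro u v ⟨s, rfl⟩ ⟨t, rfl⟩
    -- reduce to pure tensors
    induction s using TensorProduct.induction_on with
    | zero => simp
    | add s₁ s₂ h₁ h₂ =>
        rw [map_add, add_mul]
        exact Submodule.add_mem _ h₁ h₂
    | tmul x y =>
      induction t using TensorProduct.induction_on with
      | zero => simp
      | add t₁ t₂ h₁ h₂ =>
          rw [map_add, mul_add]
          exact Submodule.add_mem _ h₁ h₂
      | tmul z w =>
        -- the key computation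
        set B := (LinearMap.mul R (Module.End R A)).flip.compl₁₂ D
            ((Algebra.lmul R A).toLinearMap ∘ₗ D.flip z) with hB
        -- g a b = (x * D b z) ⊗ (w * a)
        set g : A →ₗ[R] A →ₗ[R] A ⊗[R] A :=
          LinearMap.mk₂ R (fun a b => (x * (D b) z) ⊗ₜ[R] (w * a))
            (fun a a' b => by simp only [mul_add, tmul_add])
            (fun r a b => by simp only [mul_smul_comm, tmul_smul])
            (fun a b b' => by simp only [map_add, LinearMap.add_apply, mul_add, add_tmul])
            (fun r a b => by
              rw [map_smul, LinearMap.smul_apply, mul_smul_comm, smul_tmul'])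
            with hg
        refine ⟨TensorProduct.lift g (Coalgebra.comul (R := R) y), ?_⟩
        have key : ∀ c : A ⊗[R] A,
            φ (TensorProduct.lift g c) =
              (Algebra.lmul R A x) * (TensorProduct.lift B c * D w) := by
          intro c
          induction c using TensorProduct.induction_on with
          | zero => simp
          | add c₁ c₂ h₁ h₂ => simp [map_add, add_mul, mul_add, h₁, h₂]
          | tmul a b =>
            rw [TensorProduct.lift.tmul, TensorProduct.lift.tmul, hg, hB]
            simp only [LinearMap.mk₂_apply, LinearMap.compl₁₂_apply, LinearMap.flip_apply,
              LinearMap.mul_apply', LinearMap.comp_apply]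
            rw [hφapp, map_mul]
            have hDa : D a * D w = D (w * a) := hDmul a w
            rw [mul_assoc, mul_assoc, hDa]
            rfl
        rw [key, hφapp, hφapp]
        have hDm : (D y) * (Algebra.lmul R A z) = TensorProduct.lift B (Coalgebra.comul (R := R) y) := by
          exact heis y z
        rw [mul_assoc, ← mul_assoc (D y), hDm]
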